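/- Let F be a field and let A₁, …, A_k be linear endomorphisms of an n-dimensional vector space V over F such that Aⱼ² = 0 for all j and AᵢAⱼ = AⱼAᵢ for all i, j. Then there exists a basis of V in which all the Aᵢ are represented by strictly lower triangular matrices. -/

import Mathlib

/-! Common framework: qubit gates, the Pauli group, the Clifford hierarchy,
permutation gates, Toffoli gates and staircase form, descending multiplications,
multilinear polynomial representations. -/

/-- Vectors in `𝔽₂ⁿ`, indexing computational basis states. -/
abbrev QV (n : ℕ) := Fin n → ZMod 2

/-- `n`-qubit gates: `2ⁿ × 2ⁿ` complex matrices indexed by `𝔽₂ⁿ`. -/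
abbrev QMat (n : ℕ) := Matrix (QV n) (QV n) ℂ

/-- Standard basis vector `eᵢ` of `𝔽₂ⁿ`. -/
def stdBasis (n : ℕ) (i : Fin n) : QV n := fun m => if m = i then 1 else 0

/-- The gate `X^u Z^z`, sending `|b⟩` to `(-1)^(z·b) |b+u⟩`. -/
noncomputable def XZGate (n : ℕ) (u z : QV n) : QMat n :=
  fun a b => if a = b + u then (-1 : ℂ) ^ (∑ i, (z i).val * (b i).val) else 0

/-- The Pauli group on `n` qubits: gates `c·P₁⊗⋯⊗Pₙ`, `c ∈ {±1, ±i}`,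
`Pᵢ ∈ {I,X,Y,Z}`, equivalently phases times `X^u Z^z`. -/
def PauliGroup (n : ℕ) : Set (QMat n) :=
  { P | ∃ (c : ℂ) (u z : QV n),
      (c = 1 ∨ c = -1 ∨ c = Complex.I ∨ c = -Complex.I) ∧ P = c • XZGate n u z }

/-- Level `k` of the Clifford hierarchy `𝒞ₖ` (level 1 is the Pauli group,
level 2 the Clifford group; level 0 is junk/empty). -/
def CliffordLevel (n : ℕ) : ℕ → Set (QMat n)
  | 0 => ∅
  | 1 => PauliGroup n
  | (k+2) => { U | U ∈ Matrix.unitaryGroup (QV n) ℂ ∧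
      ∀ P ∈ PauliGroup n, U * P * star U ∈ CliffordLevel n (k+1) }

/-- The permutation gate of a permutation `f` of `𝔽₂ⁿ`: sends `|v⟩` to `|f v⟩`. -/
noncomputable def permGate (n : ℕ) (f : QV n ≃ QV n) : QMat n :=
  fun a b => if a = f b then 1 else 0

/-- A diagonal gate. -/
def IsDiagonal (n : ℕ) (d : QMat n) : Prop := ∀ a b : QV n, a ≠ b → d a b = 0

/-- A gate is semi-Clifford if it equals `φ₁ d φ₂` for Clifford `φ₁, φ₂` and diagonal `d`. -/
def IsSemiClifford (n : ℕ) (U : QMat n) : Prop :=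
  ∃ φ₁ d φ₂ : QMat n, φ₁ ∈ CliffordLevel n 2 ∧ φ₂ ∈ CliffordLevel n 2 ∧
    IsDiagonal n d ∧ U = φ₁ * d * φ₂

/-- The underlying map of the Toffoli gate `TOF_{i,j,k}`: `v ↦ v + (vᵢvⱼ)·eₖ`. -/
def tofFun (n : ℕ) (i j k : Fin n) (v : QV n) : QV n :=
  fun m => if m = k then v m + v i * v j else v m

/-- A map on `𝔽₂ⁿ` is in staircase form if it is a product (applied left-to-right)
of pairwise distinct Toffoli gates `TOF_{i,j,k}` with `i<j<k` and with targets
nondecreasing in the order the gates are applied. -/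
def IsStaircase (n : ℕ) (g : QV n → QV n) : Prop :=
  ∃ L : List (Fin n × Fin n × Fin n),
    L.Nodup ∧
    (∀ t ∈ L, t.1 < t.2.1 ∧ t.2.1 < t.2.2) ∧
    List.Chain' (fun s t => s.2.2 ≤ t.2.2) L ∧
    g = fun v => L.foldl (fun w t => tofFun n t.1 t.2.1 t.2.2 w) v

/-- A descending multiplication on `𝔽₂ⁿ`: bilinear, associative, commutative,
`eᵢeᵢ = 0`, and for `i < j`, `eᵢeⱼ ∈ span{eₖ : k > j}`. -/
def IsDescendingMul (n : ℕ) (mul : QV n → QV n → QV n) : Prop :=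
  (∀ u v w : QV n, mul (u + v) w = mul u w + mul v w) ∧
  (∀ u v w : QV n, mul u (v + w) = mul u v + mul u w) ∧
  (∀ u v w : QV n, mul (mul u v) w = mul u (mul v w)) ∧
  (∀ u v : QV n, mul u v = mul v u) ∧
  (∀ i : Fin n, mul (stdBasis n i) (stdBasis n i) = 0) ∧
  (∀ i j : Fin n, i < j → ∀ m : Fin n, m ≤ j → mul (stdBasis n i) (stdBasis n j) m = 0)

/-- The product `∏_{i ∈ l} eᵢ` under a multiplication, for a list `l` (junk `0` on `[]`). -/
def dmProdList (n : ℕ) (mul : QV n → QV n → QV n) : List (Fin n) → QV n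
  | [] => 0
  | [i] => stdBasis n i
  | i :: j :: rest => mul (stdBasis n i) (dmProdList n mul (j :: rest))

/-- The product `∏_{i ∈ T} eᵢ` under a multiplication. -/
def dmProd (n : ℕ) (mul : QV n → QV n → QV n) (T : Finset (Fin n)) : QV n :=
  dmProdList n mul (T.sort (· ≤ ·))

/-- `g` is the map `∑_{i∈S} eᵢ ↦ ∑_{∅≠T⊆S} ∏_{i∈T} eᵢ` associated to a multiplication. -/
def dmPiSpec (n : ℕ) (mul : QV n → QV n → QV n) (g : QV n → QV n) : Prop :=
  ∀ S : Finset (Fin n),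
    g (∑ i ∈ S, stdBasis n i) = ∑ T ∈ S.powerset.erase ∅, dmProd n mul T

/-- The bilinear extension of `eᵢeⱼ := g(eᵢ+eⱼ) + eᵢ + eⱼ`. -/
def inducedMul (n : ℕ) (g : QV n → QV n) (u v : QV n) : QV n :=
  ∑ i : Fin n, ∑ j : Fin n,
    (u i * v j) • (g (stdBasis n i + stdBasis n j) + stdBasis n i + stdBasis n j)

/-- Coefficient of the monomial `∏_{i∈T} aᵢ` in the unique multilinear polynomial
over `𝔽₂` representing `g : 𝔽₂ⁿ → 𝔽₂` (Möbius inversion over `𝔽₂`). -/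
def mlCoeff (n : ℕ) (g : QV n → ZMod 2) (T : Finset (Fin n)) : ZMod 2 :=
  ∑ R ∈ T.powerset, g (∑ i ∈ R, stdBasis n i)

/-- Strictly lower triangular matrix. -/
def StrictLowerTri (n : ℕ) (A : Matrix (Fin n) (Fin n) (ZMod 2)) : Prop :=
  ∀ p q : Fin n, p ≤ q → A p q = 0

/-- Multiplication of basis vectors for the gate `U_k`: the basis of `𝔽₂^(2^k-1)` is
indexed by nonempty subsets `S ⊆ [k]`, encoded as indices `a` via the binary digits of
`a+1`; `e_S e_T = e_{S∪T}` if `S ∩ T = ∅` and `e_S e_T = 0` otherwise. -/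
def ukBasisMul (k : ℕ) (a b : Fin (2 ^ k - 1)) : QV (2 ^ k - 1) :=
  if (a.val + 1) &&& (b.val + 1) = 0 then
    (if h : a.val + b.val + 1 < 2 ^ k - 1 then stdBasis (2 ^ k - 1) ⟨a.val + b.val + 1, h⟩
     else 0)
  else 0

/-- The descending multiplication defining `U_k`, extended bilinearly. -/
def ukMul (k : ℕ) (u v : QV (2 ^ k - 1)) : QV (2 ^ k - 1) :=
  ∑ a : Fin (2 ^ k - 1), ∑ b : Fin (2 ^ k - 1), (u a * v b) • ukBasisMul k a b

open Module

/-- Joint kernel of commuting square-zero endomorphisms is nonzero. -/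
lemma exists_joint_kernel {F : Type*} [Field F] {V : Type*} [AddCommGroup V] [Module F V]
    [Nontrivial V] {k : ℕ} (A : Fin k → Module.End F V)
    (hsq : ∀ j, A j * A j = 0) (hcomm : ∀ i j, Commute (A i) (A j)) :
    ∃ v : V, v ≠ 0 ∧ ∀ j, A j v = 0 := by
  classical
  -- the filtration W s
  let W : ℕ → Submodule F V := fun s => Nat.rec ⊥ (fun _ Ws => ⨅ j, Ws.comap (A j)) s
  have hW0 : W 0 = ⊥ := rfl
  have hWs : ∀ s, W (s + 1) = ⨅ j, (W s).comap (A j) := fun s => rfl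
  -- products of length k+1 vanish
  have hprod : ∀ l : List (Fin k), l.length = k + 1 → (l.map A).prod = 0 := by
    intro l hl
    have hnd : ¬ l.Nodup := by
      intro h
      have := h.length_le_card
      simp [hl] at this
    obtain ⟨x, hx⟩ := List.exists_duplicate_iff_not_nodup.mpr hnd
    have h1 : x ∈ l := hx.mem
    have h2 : x ∈ l.erase x := by
      have hc : 2 ≤ l.count x := List.duplicate_iff_two_le_count.mp hx
      have : 0 < (l.erase x).count x := by
        rw [List.count_erase_self]; omega
      exact List.count_pos_iff.mp this
    have hp : l.Perm (x :: x :: ((l.erase x).erase x)) :=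
      (List.perm_cons_erase h1).trans ((List.perm_cons_erase h2).cons x)
    have hpair : (l.map A).Pairwise Commute :=
      List.pairwise_map.mpr (List.pairwise_iff_forall_sublist.mpr (fun {a b} _ => hcomm a b))
    have := (hp.map A).prod_eq' hpair
    simp only [List.map_cons, List.prod_cons] at this
    rw [this, ← mul_assoc, hsq x, zero_mul]
  -- membership criterion
  have hmem : ∀ s (v : V), (∀ l : List (Fin k), l.length = s → (l.map A).prod v = 0) → v ∈ W s := by
    intro s
    induction s with
    | zero =>
      intro v hv
      have := hv [] rfl
      simp at this
      simp [hW0, this]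
    | succ t ih =>
      intro v hv
      rw [hWs t, Submodule.mem_iInf]
      intro j
      rw [Submodule.mem_comap]
      apply ih
      intro l hl
      have := hv (l ++ [j]) (by simp [hl])
      simpa [List.prod_append, Module.End.mul_apply] using this
  have htop : W (k + 1) = ⊤ := by
    rw [eq_top_iff]
    intro v _
    exact hmem (k + 1) v fun l hl => by rw [hprod l hl]; rfl
  -- W 1 is nonzero
  have hW1 : W 1 ≠ ⊥ := by
    intro hbot
    have hall : ∀ s, W (s + 1) = ⊥ := by
      intro s
      induction s with
      | zero => exact hbot
      | succ t ih =>
        rw [hWs (t + 1), ih]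
        have hbot' : (⨅ j, (W 0).comap (A j)) = ⊥ := hbot
        rw [hW0] at hbot'
        exact hbot'
    have := hall k
    rw [htop] at this
    exact top_ne_bot this
  obtain ⟨v, hv, hv0⟩ := Submodule.exists_mem_ne_zero_of_ne_bot hW1
  refine ⟨v, hv0, fun j => ?_⟩
  have hv' : v ∈ ⨅ j, (W 0).comap (A j) := hv
  rw [Submodule.mem_iInf] at hv'
  have := hv' j
  rw [Submodule.mem_comap, hW0, Submodule.mem_bot] at this
  exact this

/-- The upper-triangular version, by induction on dimension. -/
lemma aux_upper (F : Type u₁) [Field F] :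
    ∀ (n : ℕ) (V : Type u₂) [AddCommGroup V] [Module F V] [FiniteDimensional F V],
      Module.finrank F V = n → ∀ (k : ℕ) (A : Fin k → Module.End F V),
      (∀ j, A j * A j = 0) → (∀ i j, Commute (A i) (A j)) →
      ∃ b : Basis (Fin n) F V, ∀ (j : Fin k) (p q : Fin n), q ≤ p →
        LinearMap.toMatrix b b (A j) p q = 0 := by
  intro n
  induction n with
  | zero =>
    intro V _ _ _ hdim k A _ _
    have : Subsingleton V := finrank_zero_iff.mp hdim
    exact ⟨Basis.empty V, fun j p => p.elim0⟩
  | succ m ih =>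
    intro V _ _ _ hdim k A hsq hcomm
    classical
    have : Nontrivial V := by
      rw [← Module.finrank_pos_iff (R := F)]; omega
    obtain ⟨v, hv0, hvk⟩ := exists_joint_kernel A hsq hcomm
    set p : Submodule F V := Submodule.span F {v} with hp
    have hle : ∀ j, p ≤ p.comap (A j) := fun j => Submodule.span_le.mpr (by
      intro x hx
      simp only [Set.mem_singleton_iff] at hx
      subst hx
      simp [Submodule.mem_comap, hvk j])
    set B : Fin k → Module.End F (V ⧸ p) := fun j => Submodule.mapQ p p (A j) (hle j) with hB
    have hmk : ∀ j x, B j (Submodule.Quotient.mk x) = Submodule.Quotient.mk ((A j) x) :=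
      fun j x => Submodule.mapQ_apply p p (A j) x
    have hBsq : ∀ j, B j * B j = 0 := by
      intro j
      refine LinearMap.ext fun x => ?_
      obtain ⟨y, rfl⟩ := Submodule.Quotient.mk_surjective p x
      have : A j (A j y) = 0 := by
        have := congrFun (congrArg DFunLike.coe (hsq j)) y
        simpa [Module.End.mul_apply] using this
      simp [Module.End.mul_apply, hmk, this]
    have hBcomm : ∀ i j, Commute (B i) (B j) := by
      intro i j
      have hc := hcomm i j
      rw [Commute, SemiconjBy] at hc ⊢
      refine LinearMap.ext fun x => ?_
      obtain ⟨y, rfl⟩ := Submodule.Quotient.mk_surjective p x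
      have : A i (A j y) = A j (A i y) := by
        have := congrFun (congrArg DFunLike.coe hc) y
        simpa [Module.End.mul_apply] using this
      simp [Module.End.mul_apply, hmk, this]
    have hdimq : Module.finrank F (V ⧸ p) = m := by
      have h1 : Module.finrank F p = 1 := finrank_span_singleton hv0
      have h2 := Submodule.finrank_quotient_add_finrank p
      omega
    obtain ⟨bq, hbq⟩ := ih (V ⧸ p) hdimq k B hBsq hBcomm
    -- lift the basis
    choose u hu using fun i => Submodule.Quotient.mk_surjective p (bq i)
    set c : Fin (m + 1) → V := Fin.cons v u with hc
    have hspan : ⊤ ≤ Submodule.span F (Set.range c) := by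
      intro z _
      set S := Submodule.span F (Set.range c) with hS
      have hvS : v ∈ S := Submodule.subset_span ⟨0, by simp [hc]⟩
      have huS : ∀ i, u i ∈ S := fun i => Submodule.subset_span ⟨i.succ, by simp [hc]⟩
      set w := ∑ i, bq.repr (Submodule.Quotient.mk z) i • u i with hw
      have hzw : z - w ∈ p := by
        rw [← Submodule.Quotient.mk_eq_zero p]
        show p.mkQ (z - w) = 0
        rw [map_sub]
        have h2 : p.mkQ w = p.mkQ z := by
          rw [hw, map_sum]
          simp_rw [map_smul, Submodule.mkQ_apply, hu]
          exact bq.sum_repr (Submodule.Quotient.mk z)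
        rw [h2, sub_self]
      have hpS : p ≤ S := Submodule.span_le.mpr (by
        intro x hx; simp only [Set.mem_singleton_iff] at hx; subst hx; exact hvS)
      have hz : z = (z - w) + w := by abel
      rw [hz]
      exact S.add_mem (hpS hzw) (Submodule.sum_mem S fun i _ => S.smul_mem _ (huS i))
    have hcard : Fintype.card (Fin (m + 1)) = Module.finrank F V := by simp [hdim]
    set b : Basis (Fin (m + 1)) F V := basisOfTopLeSpanOfCardEqFinrank c hspan hcard with hbdef
    have hbc : ⇑b = c := coe_basisOfTopLeSpanOfCardEqFinrank c hspan hcard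
    refine ⟨b, fun j q' q hqq => ?_⟩
    -- rename: entry (q', q) with q ≤ q'
    rw [LinearMap.toMatrix_apply]
    induction q using Fin.cases with
    | zero =>
      have : b 0 = v := by rw [hbc]; simp [hc]
      rw [this, hvk j]
      simp
    | succ i =>
      -- q = i.succ ≤ q', so q' = p'.succ with i ≤ p'
      obtain ⟨p', rfl⟩ : ∃ p'' : Fin m, q' = p''.succ := by
        refine ⟨q'.pred (fun h => ?_), ?_⟩
        · rw [h] at hqq; exact absurd hqq (by simp [Fin.le_def])
        · simp
      have hip : i ≤ p' := by
        rwa [Fin.succ_le_succ_iff] at hqq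
      have hbsucc : ∀ m' : Fin m, b m'.succ = u m' := by
        intro m'; rw [hbc]; simp [hc]
      have hbi : b i.succ = u i := hbsucc i
      -- key decomposition
      set d : Fin m → F := fun m' => LinearMap.toMatrix bq bq (B j) m' i with hd
      have hdiff : A j (u i) - ∑ m', d m' • u m' ∈ p := by
        rw [← Submodule.Quotient.mk_eq_zero p]
        show p.mkQ (A j (u i) - ∑ m', d m' • u m') = 0
        rw [map_sub, map_sum]
        simp_rw [map_smul, Submodule.mkQ_apply, hu]
        have h1 : (Submodule.Quotient.mk (A j (u i)) : V ⧸ p) = B j (bq i) := by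
          rw [← hmk, hu]
        rw [h1]
        have h2 : ∑ m', d m' • bq m' = B j (bq i) := by
          simp_rw [hd, LinearMap.toMatrix_apply]
          exact bq.sum_repr (B j (bq i))
        rw [h2, sub_self]
      rw [Submodule.mem_span_singleton] at hdiff
      obtain ⟨s, hs⟩ := hdiff
      have hkey : A j (u i) = s • b 0 + ∑ m', d m' • b m'.succ := by
        have hb0 : b 0 = v := by rw [hbc]; simp [hc]
        rw [hb0]
        simp_rw [hbsucc]
        calc A j (u i) = (A j (u i) - ∑ m', d m' • u m') + ∑ m', d m' • u m' := by abel
          _ = s • v + ∑ m', d m' • u m' := by rw [hs]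
      rw [hbi, hkey]
      rw [map_add, map_smul, map_sum]
      simp_rw [map_smul, Basis.repr_self]
      rw [Finsupp.add_apply, Finsupp.smul_apply, Finsupp.single_apply]
      have h0 : ((0 : Fin (m+1)) = p'.succ) = False := by
        simp [Fin.ext_iff]
      rw [if_neg (by simp [Fin.ext_iff])]
      have : (∑ m', d m' • Finsupp.single m'.succ (1 : F)) p'.succ = d p' := by
        rw [Finsupp.finset_sum_apply]
        simp_rw [Finsupp.smul_apply, Finsupp.single_apply]
        rw [Finset.sum_eq_single p']
        · simp
        · intro m' _ hne
          rw [if_neg (by simpa [Fin.succ_inj] using hne)]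
          simp
        · simp
      rw [this]
      have : d p' = 0 := hbq j p' i hip
      rw [this]
      simp

/-- Commuting square-zero endomorphisms of an `n`-dimensional vector
space can be simultaneously strictly lower triangularized. -/
theorem stmt14 (F : Type*) [Field F] (V : Type*) [AddCommGroup V] [Module F V]
    [FiniteDimensional F V] (n k : ℕ) (hdim : Module.finrank F V = n)
    (A : Fin k → V →ₗ[F] V)
    (hsq : ∀ j, A j ∘ₗ A j = 0)
    (hcomm : ∀ i j, A i ∘ₗ A j = A j ∘ₗ A i) :
    ∃ b : Module.Basis (Fin n) F V, ∀ (j : Fin k) (p q : Fin n), p ≤ q →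
      LinearMap.toMatrix b b (A j) p q = 0 := by
  have hsq' : ∀ j, (A j : Module.End F V) * A j = 0 := fun j => by
    rw [Module.End.mul_eq_comp]; exact hsq j
  have hcomm' : ∀ i j, Commute (A i : Module.End F V) (A j) := fun i j => by
    rw [Commute, SemiconjBy, Module.End.mul_eq_comp, Module.End.mul_eq_comp]; exact hcomm i j
  obtain ⟨b, hb⟩ := aux_upper F n V hdim k A hsq' hcomm'
  refine ⟨b.reindex Fin.revPerm, fun j p q hpq => ?_⟩
  rw [LinearMap.toMatrix_apply, Module.Basis.reindex_apply, Basis.repr_reindex_apply]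
  have hsymm : (Fin.revPerm : Equiv.Perm (Fin n)).symm = Fin.revPerm := by
    ext x; simp
  rw [hsymm]
  have := hb j (Fin.rev p) (Fin.rev q) (Fin.rev_le_rev.mpr hpq)
  rw [LinearMap.toMatrix_apply] at this
  simpa using this
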